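/- Functoriality of the Deligne splitting: let f : V → V' be a morphism of mixed Hodge structures (V, W, F) → (V', W', F'), and let (I^{p,q}) and (I'^{p,q}) be the Deligne splittings of V_ℂ and V'_ℂ respectively (the unique bigradings satisfying (W_n)_ℂ = ⊕_{p+q≤n} I^{p,q}, F^p = ⊕_{r≥p} I^{r,s}, and I^{p,q} ≡ σ(I^{q,p}) modulo ⊕_{r<p,s<q} I^{r,s}). Then f_ℂ(I^{p,q}) ⊆ I'^{p,q} for all (p,q). -/

import Mathlib

open scoped TensorProduct

private lemma sigmaC_aux (V : Type*) [AddCommGroup V] [Module ℝ V] (c : ℂ) (x : ℂ ⊗[ℝ] V) :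
    TensorProduct.map Complex.conjAe.toLinearMap LinearMap.id (c • x) =
      (starRingEnd ℂ) c • TensorProduct.map Complex.conjAe.toLinearMap LinearMap.id x := by
  induction x using TensorProduct.induction_on with
  | zero => simp
  | tmul z v => simp [TensorProduct.smul_tmul', smul_eq_mul, map_mul]
  | add x y hx hy => simp only [smul_add, map_add, hx, hy]

/-- The conjugation involution `σ` of the complexification `ℂ ⊗[ℝ] V`,
as a `conj`-semilinear map. -/
noncomputable def sigmaC (V : Type*) [AddCommGroup V] [Module ℝ V] :
    (ℂ ⊗[ℝ] V) →ₛₗ[starRingEnd ℂ] (ℂ ⊗[ℝ] V) where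
  toFun := TensorProduct.map Complex.conjAe.toLinearMap LinearMap.id
  map_add' x y := map_add _ x y
  map_smul' c x := sigmaC_aux V c x

/-- A mixed Hodge structure on a real vector space `V`: an increasing, bounded, exhaustive
weight filtration `W` of `V` by real subspaces and a decreasing, bounded, exhaustive Hodge
filtration `F` of `V_ℂ = ℂ ⊗[ℝ] V` by complex subspaces, such that for every `n` the
filtration induced by `F` on `Gr^W_n = W_n / W_{n-1}` is a Hodge filtration of weight `n`.

Identifying the complexification of `Gr^W_n` with `(W_n)_ℂ / (W_{n-1})_ℂ` (where
`(W_n)_ℂ := (W n).baseChange ℂ ⊆ V_ℂ`), the Hodge filtration condition of weight `n` on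
`Gr^W_n` — namely `F^p(Gr^W_n)_ℂ ⊕ σ(F^{n-p+1}(Gr^W_n)_ℂ) = (Gr^W_n)_ℂ` for all `p`, where
`F^p(Gr^W_n)_ℂ` is the image of `F^p ⊓ (W_n)_ℂ` — is expressed below by pulling back along
the quotient map `(W_n)_ℂ → (W_n)_ℂ / (W_{n-1})_ℂ`: the first displayed equation is the
disjointness of the two images in the quotient, the second their spanning of the quotient. -/
def IsMixedHodgeStructure (V : Type*) [AddCommGroup V] [Module ℝ V]
    (W : ℤ → Submodule ℝ V) (F : ℤ → Submodule ℂ (ℂ ⊗[ℝ] V)) : Prop :=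
  Monotone W ∧
  (∃ a : ℤ, ∀ n ≤ a, W n = ⊥) ∧
  (∃ b : ℤ, ∀ n ≥ b, W n = ⊤) ∧
  (∀ p : ℤ, F (p + 1) ≤ F p) ∧
  (∃ a : ℤ, ∀ p ≤ a, F p = ⊤) ∧
  (∃ b : ℤ, ∀ p ≥ b, F p = ⊥) ∧
  (∀ n p : ℤ,
    ((F p ⊓ (W n).baseChange ℂ) ⊔ (W (n - 1)).baseChange ℂ) ⊓
        (((F (n - p + 1) ⊓ (W n).baseChange ℂ).map (sigmaC V)) ⊔ (W (n - 1)).baseChange ℂ)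
      = (W (n - 1)).baseChange ℂ ∧
    (F p ⊓ (W n).baseChange ℂ) ⊔ ((F (n - p + 1) ⊓ (W n).baseChange ℂ).map (sigmaC V))
        ⊔ (W (n - 1)).baseChange ℂ
      = (W n).baseChange ℂ)

/-- The Deligne splitting conditions for a bigrading `I^{p,q}` of `V_ℂ` attached to a mixed
Hodge structure `(W, F)`: (i) `V_ℂ = ⊕ I^{p,q}`; (ii) `(W_n)_ℂ = ⊕_{p+q≤n} I^{p,q}`;
(iii) `F^p = ⊕_{r≥p} I^{r,s}`; (iv) `I^{p,q} ≡ σ(I^{q,p})` modulo `⊕_{r<p,s<q} I^{r,s}`,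
i.e. their images in the quotient of `V_ℂ` by `⊕_{r<p,s<q} I^{r,s}` coincide. -/
def IsDeligneSplitting (V : Type*) [AddCommGroup V] [Module ℝ V]
    (W : ℤ → Submodule ℝ V) (F : ℤ → Submodule ℂ (ℂ ⊗[ℝ] V))
    (I : ℤ × ℤ → Submodule ℂ (ℂ ⊗[ℝ] V)) : Prop :=
  DirectSum.IsInternal I ∧
  (∀ n : ℤ, (W n).baseChange ℂ = ⨆ (pq : ℤ × ℤ) (_ : pq.1 + pq.2 ≤ n), I pq) ∧
  (∀ p : ℤ, F p = ⨆ (pq : ℤ × ℤ) (_ : p ≤ pq.1), I pq) ∧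
  (∀ p q : ℤ,
    (I (p, q)).map (⨆ (pq : ℤ × ℤ) (_ : pq.1 < p ∧ pq.2 < q), I pq).mkQ =
      ((I (q, p)).map (sigmaC V)).map
        (⨆ (pq : ℤ × ℤ) (_ : pq.1 < p ∧ pq.2 < q), I pq).mkQ)

section Basic
variable {V V' : Type*} [AddCommGroup V] [Module ℝ V] [AddCommGroup V'] [Module ℝ V']

lemma sigmaC_tmul (z : ℂ) (v : V) : sigmaC V (z ⊗ₜ[ℝ] v) = (starRingEnd ℂ) z ⊗ₜ[ℝ] v := by
  rfl

lemma sigmaC_sigmaC (x : ℂ ⊗[ℝ] V) : sigmaC V (sigmaC V x) = x := by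
  induction x using TensorProduct.induction_on with
  | zero => simp
  | tmul z v => rw [sigmaC_tmul, sigmaC_tmul]; simp
  | add x y hx hy => rw [map_add, map_add, hx, hy]

lemma sigmaC_baseChange_comm (f : V →ₗ[ℝ] V') (x : ℂ ⊗[ℝ] V) :
    f.baseChange ℂ (sigmaC V x) = sigmaC V' (f.baseChange ℂ x) := by
  induction x using TensorProduct.induction_on with
  | zero => simp
  | tmul z v => rw [sigmaC_tmul, LinearMap.baseChange_tmul, LinearMap.baseChange_tmul, sigmaC_tmul]
  | add x y hx hy => simp only [map_add, hx, hy]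

lemma map_sigmaC_le_of_le {X : Submodule ℂ (ℂ ⊗[ℝ] V)} (h : X.map (sigmaC V) ≤ X) :
    X.map (sigmaC V) = X := by
  refine le_antisymm h fun x hx => ?_
  exact ⟨sigmaC V x, h ⟨x, hx, rfl⟩, sigmaC_sigmaC x⟩

lemma map_sigmaC_baseChange (W : Submodule ℝ V) :
    (W.baseChange ℂ).map (sigmaC V) = W.baseChange ℂ := by
  refine map_sigmaC_le_of_le ?_
  rw [Submodule.map_le_iff_le_comap, Submodule.baseChange_eq_span, Submodule.span_le]
  rintro - ⟨w, hw, rfl⟩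
  simp only [SetLike.mem_coe, Submodule.mem_comap, TensorProduct.mk_apply, sigmaC_tmul, map_one]
  rw [← Submodule.baseChange_eq_span]
  exact Submodule.tmul_mem_baseChange_of_mem 1 hw

lemma map_sigmaC_inf (X Y : Submodule ℂ (ℂ ⊗[ℝ] V)) :
    (X ⊓ Y).map (sigmaC V) = X.map (sigmaC V) ⊓ Y.map (sigmaC V) := by
  refine le_antisymm (le_inf (Submodule.map_mono inf_le_left) (Submodule.map_mono inf_le_right)) ?_
  rintro x ⟨⟨a, ha, rfl⟩, b, hb, hba⟩
  have : b = a := by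
    have := congrArg (sigmaC V) hba
    rwa [sigmaC_sigmaC, sigmaC_sigmaC] at this
  exact ⟨a, ⟨ha, this ▸ hb⟩, rfl⟩

end Basic

section DS
variable {ι M : Type*} [DecidableEq ι] [AddCommGroup M] [Module ℂ M]

open DirectSum

lemma mem_biSup_iff_decompose (I : ι → Submodule ℂ M) [Decomposition I] (P : ι → Prop) (x : M) :
    x ∈ (⨆ i, ⨆ _ : P i, I i) ↔ ∀ i, ¬ P i → decompose I x i = 0 := by
  classical
  constructor
  · intro hx
    refine Submodule.iSup_induction (motive := fun y => ∀ i, ¬ P i → decompose I y i = 0) _ hx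
      ?_ (by simp) ?_
    · intro i₀ y hy i hi
      by_cases hP : P i₀
      · rw [iSup_pos hP] at hy
        have hne : i₀ ≠ i := fun h => hi (h ▸ hP)
        ext
        rw [decompose_of_mem_ne I hy hne]
        rfl
      · rw [iSup_neg hP, Submodule.mem_bot] at hy
        simp [hy]
    · intro a b ha hb i hi
      rw [decompose_add]
      simp [ha i hi, hb i hi]
  · intro h
    have := DirectSum.sum_support_decompose I x
    rw [← this]
    refine Submodule.sum_mem _ fun i hi => ?_
    have hPi : P i := by
      by_contra hP
      exact (DFinsupp.mem_support_iff.mp hi) (h i hP)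
    exact Submodule.mem_iSup_of_mem i (by rw [iSup_pos hPi]; exact (decompose I x i).2)

lemma biSup_inf_biSup_le {I : ι → Submodule ℂ M} (h : DirectSum.IsInternal I) (P Q : ι → Prop) :
    (⨆ i, ⨆ _ : P i, I i) ⊓ (⨆ i, ⨆ _ : Q i, I i) ≤ ⨆ i, ⨆ _ : P i ∧ Q i, I i := by
  letI := h.chooseDecomposition
  intro x hx
  rw [mem_biSup_iff_decompose]
  intro i hi
  rcases not_and_or.mp hi with hP | hQ
  · exact (mem_biSup_iff_decompose I P x).mp hx.1 i hP
  · exact (mem_biSup_iff_decompose I Q x).mp hx.2 i hQ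

end DS

section Main

open Submodule

variable {V : Type*} [AddCommGroup V] [Module ℝ V]

noncomputable section PhiDef

/-- The "tail" `⨆_{j ≥ 2} σ(F^{q-j+1}) ⊓ (W_{p+q-j})_ℂ` of Deligne's explicit formula. -/
def PhiT (W : ℤ → Submodule ℝ V) (F : ℤ → Submodule ℂ (ℂ ⊗[ℝ] V)) (p q : ℤ) :
    Submodule ℂ (ℂ ⊗[ℝ] V) :=
  ⨆ (j : ℤ) (_ : 2 ≤ j), ((F (q - j + 1)).map (sigmaC V) ⊓ (W (p + q - j)).baseChange ℂ)

/-- Deligne's explicit formula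
`Φ^{p,q} = F^p ⊓ W_{p+q} ⊓ (σ(F^q) ⊓ W_{p+q} ⊔ Σ_{j≥2} σ(F^{q-j+1}) ⊓ W_{p+q-j})`. -/
def Phi (W : ℤ → Submodule ℝ V) (F : ℤ → Submodule ℂ (ℂ ⊗[ℝ] V)) (p q : ℤ) :
    Submodule ℂ (ℂ ⊗[ℝ] V) :=
  F p ⊓ (W (p + q)).baseChange ℂ ⊓
    (((F q).map (sigmaC V) ⊓ (W (p + q)).baseChange ℂ) ⊔ PhiT W F p q)

end PhiDef

lemma le_biSup' {ι : Sort*} {M : Type*} [AddCommGroup M] [Module ℂ M]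
    (S : ι → Submodule ℂ M) {P : ι → Prop} {i : ι} (h : P i) :
    S i ≤ ⨆ (i) (_ : P i), S i :=
  le_iSup_of_le i (le_iSup_of_le h le_rfl)

/-- Forward inclusion: any Deligne splitting is contained in the explicit formula. -/
lemma I_le_Phi {W : ℤ → Submodule ℝ V} {F : ℤ → Submodule ℂ (ℂ ⊗[ℝ] V)}
    {I : ℤ × ℤ → Submodule ℂ (ℂ ⊗[ℝ] V)}
    (hWF : IsMixedHodgeStructure V W F) (hI : IsDeligneSplitting V W F I) (p q : ℤ) :
    I (p, q) ≤ Phi W F p q := by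
  obtain ⟨hmono, ⟨a, ha⟩, -, hstep, -, -, -⟩ := hWF
  obtain ⟨hint, hWI, hFI, hsym⟩ := hI
  have hFa : ∀ {s t : ℤ}, s ≤ t → F t ≤ F s := by
    have H : ∀ (k : ℕ) (s : ℤ), F (s + k) ≤ F s := by
      intro k
      induction k with
      | zero => intro s; simp
      | succ k ih =>
        intro s
        rw [show (s + ((k + 1 : ℕ) : ℤ)) = (s + k) + 1 by push_cast; ring]
        exact le_trans (hstep (s + k)) (ih s)
    intro s t h
    have := H (t - s).toNat s
    rwa [show s + ((t - s).toNat : ℤ) = t by omega] at this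
  have hIF : ∀ p q : ℤ, I (p, q) ≤ F p := by
    intro p q
    rw [hFI]
    exact le_biSup' _ (show p ≤ (p, q).1 from le_rfl)
  have hIW : ∀ p q : ℤ, I (p, q) ≤ (W (p + q)).baseChange ℂ := by
    intro p q
    rw [hWI]
    exact le_biSup' _ (show (p, q).1 + (p, q).2 ≤ p + q from le_rfl)
  have key : ∀ p q : ℤ,
      I (p, q) ≤ ((F q).map (sigmaC V) ⊓ (W (p + q)).baseChange ℂ) ⊔ PhiT W F p q := by
    suffices H : ∀ k : ℕ, ∀ p q : ℤ, p + q ≤ a + k →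
        I (p, q) ≤ ((F q).map (sigmaC V) ⊓ (W (p + q)).baseChange ℂ) ⊔ PhiT W F p q by
      intro p q
      exact H (p + q - a).toNat p q (by omega)
    intro k
    induction k with
    | zero =>
      intro p q hpq
      have h1 := hIW p q
      rw [ha (p + q) (by omega), Submodule.baseChange_bot] at h1
      exact le_trans h1 bot_le
    | succ k IH =>
      intro p q hpq
      by_cases hk : p + q ≤ a + k
      · exact IH p q hk
      have h1 : I (p, q) ≤ (⨆ (pq : ℤ × ℤ) (_ : pq.1 < p ∧ pq.2 < q), I pq) ⊔
          (I (q, p)).map (sigmaC V) := by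
        have h2 := congrArg
          (Submodule.comap (⨆ (pq : ℤ × ℤ) (_ : pq.1 < p ∧ pq.2 < q), I pq).mkQ) (hsym p q)
        rw [Submodule.comap_map_mkQ, Submodule.comap_map_mkQ] at h2
        exact le_trans le_sup_right h2.le
      refine le_trans h1 (sup_le (le_trans ?_ le_sup_right) (le_trans ?_ le_sup_left))
      · -- lower terms go into the tail
        refine iSup₂_le fun pq hpq' => ?_
        obtain ⟨r, s⟩ := pq
        obtain ⟨hr, hs⟩ := hpq'
        simp only at hr hs
        refine le_trans (IH r s (by omega)) (sup_le ?_ ?_)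
        · refine le_trans ?_ (le_biSup' _ (show 2 ≤ p + q - (r + s) by omega))
          refine inf_le_inf (Submodule.map_mono (hFa (by omega))) ?_
          rw [show p + q - (p + q - (r + s)) = r + s by ring]
        · refine iSup₂_le fun j hj => ?_
          refine le_trans ?_ (le_biSup' _ (show 2 ≤ j + (p + q - (r + s)) by omega))
          refine inf_le_inf (Submodule.map_mono (hFa (by omega))) ?_
          rw [show p + q - (j + (p + q - (r + s))) = r + s - j by ring]
      · -- σ(I^{q,p}) lands in σ(F^q) ⊓ (W_n)_ℂ
        have h3 : I (q, p) ≤ F q ⊓ (W (p + q)).baseChange ℂ := by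
          refine le_inf (hIF q p) ?_
          have h4 := hIW q p
          rwa [show q + p = p + q by ring] at h4
        refine le_trans (Submodule.map_mono h3) ?_
        rw [map_sigmaC_inf, map_sigmaC_baseChange]
  exact le_inf (le_inf (hIF p q) (hIW p q)) (key p q)

/-- Backward inclusion: the explicit formula is contained in the Deligne splitting. -/
lemma Phi_le_I {W : ℤ → Submodule ℝ V} {F : ℤ → Submodule ℂ (ℂ ⊗[ℝ] V)}
    {I : ℤ × ℤ → Submodule ℂ (ℂ ⊗[ℝ] V)}
    (hI : IsDeligneSplitting V W F I) (p q : ℤ) :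
    Phi W F p q ≤ I (p, q) := by
  obtain ⟨hint, hWI, hFI, hsym⟩ := hI
  -- σ-image of a graded piece, modulo lower terms
  have hsigma : ∀ r s : ℤ, (I (r, s)).map (sigmaC V) ≤
      I (s, r) ⊔ ⨆ (pq : ℤ × ℤ) (_ : pq.1 < s ∧ pq.2 < r), I pq := by
    intro r s
    have h2 := congrArg
      (Submodule.comap (⨆ (pq : ℤ × ℤ) (_ : pq.1 < s ∧ pq.2 < r), I pq).mkQ) (hsym s r)
    rw [Submodule.comap_map_mkQ, Submodule.comap_map_mkQ] at h2
    exact le_trans le_sup_right (h2.symm.le.trans (sup_le le_sup_right le_sup_left))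
  set n := p + q with hn
  set Pbe : ℤ × ℤ → Prop :=
    fun pq => (q ≤ pq.2 ∧ pq.1 + pq.2 ≤ n) ∨ (pq.1 < p ∧ pq.1 + pq.2 ≤ n - 2) with hPbe
  -- bound for σ(F^t ⊓ (W_m)_ℂ)
  have hSW : ∀ t m : ℤ,
      ((t = q ∧ m = n) ∨ (m + q + 1 ≤ n + t ∧ m ≤ n - 2)) →
      (F t).map (sigmaC V) ⊓ (W m).baseChange ℂ ≤ ⨆ (pq : ℤ × ℤ) (_ : Pbe pq), I pq := by
    intro t m hcase
    have hcom : m + q ≤ n + t ∧ m ≤ n := by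
      rcases hcase with ⟨h4, h5⟩ | ⟨h4, h5⟩ <;> exact ⟨by omega, by omega⟩
    rw [← map_sigmaC_baseChange (W m), ← map_sigmaC_inf]
    have h1 : F t ⊓ (W m).baseChange ℂ ≤
        ⨆ (pq : ℤ × ℤ) (_ : (t ≤ pq.1) ∧ (pq.1 + pq.2 ≤ m)), I pq := by
      rw [hFI, hWI]
      exact biSup_inf_biSup_le hint _ _
    refine le_trans (Submodule.map_mono h1) ?_
    rw [Submodule.map_iSup]
    refine iSup_le fun pq => ?_
    rw [Submodule.map_iSup]
    refine iSup_le fun hpq => ?_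
    obtain ⟨r, s⟩ := pq
    obtain ⟨h1', h2'⟩ := hpq
    simp only at h1' h2'
    refine le_trans (hsigma r s) (sup_le ?_ ?_)
    · rcases hcase with ⟨h4, h5⟩ | ⟨h4, h5⟩
      · exact le_biSup' _ (Or.inl ⟨by omega, by omega⟩)
      · exact le_biSup' _ (Or.inr ⟨by omega, by omega⟩)
    · refine iSup₂_le fun ab hab => ?_
      obtain ⟨a, b⟩ := ab
      obtain ⟨ha', hb'⟩ := hab
      simp only at ha' hb'
      exact le_biSup' _ (Or.inr ⟨by omega, by omega⟩)
  have C3 : F p ⊓ (W n).baseChange ℂ ≤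
      ⨆ (pq : ℤ × ℤ) (_ : p ≤ pq.1 ∧ pq.1 + pq.2 ≤ n), I pq := by
    rw [hFI, hWI]
    exact biSup_inf_biSup_le hint _ _
  have C12 : ((F q).map (sigmaC V) ⊓ (W n).baseChange ℂ) ⊔ PhiT W F p q ≤
      ⨆ (pq : ℤ × ℤ) (_ : Pbe pq), I pq := by
    refine sup_le (hSW q n (Or.inl ⟨rfl, rfl⟩)) ?_
    refine iSup₂_le fun j hj => hSW (q - j + 1) (n - j) (Or.inr ⟨by omega, by omega⟩)
  refine le_trans (inf_le_inf C3 C12) ?_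
  refine le_trans (biSup_inf_biSup_le hint _ _) ?_
  refine iSup₂_le fun pq hpq => ?_
  obtain ⟨r, s⟩ := pq
  obtain ⟨⟨h1, h2⟩, h3⟩ := hpq
  simp only [hPbe] at h1 h2 h3
  have : (r, s) = (p, q) := by
    rcases h3 with ⟨h4, h5⟩ | ⟨h4, h5⟩ <;>
      exact Prod.ext (by omega) (by omega)
  exact le_of_eq (congrArg I this)

end Main

section Funct

open Submodule

variable {V V' : Type*} [AddCommGroup V] [Module ℝ V] [AddCommGroup V'] [Module ℝ V']

lemma map_baseChange_le {f : V →ₗ[ℝ] V'} {U : Submodule ℝ V} {U' : Submodule ℝ V'}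
    (h : U.map f ≤ U') : (U.baseChange ℂ).map (f.baseChange ℂ) ≤ U'.baseChange ℂ := by
  rw [Submodule.map_le_iff_le_comap, Submodule.baseChange_eq_span, Submodule.span_le]
  rintro - ⟨w, hw, rfl⟩
  simp only [SetLike.mem_coe, Submodule.mem_comap, TensorProduct.mk_apply,
    LinearMap.baseChange_tmul]
  exact Submodule.tmul_mem_baseChange_of_mem 1 (h ⟨w, hw, rfl⟩)

lemma map_sigma_map_le {f : V →ₗ[ℝ] V'} {X : Submodule ℂ (ℂ ⊗[ℝ] V)}
    {X' : Submodule ℂ (ℂ ⊗[ℝ] V')} (h : X.map (f.baseChange ℂ) ≤ X') :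
    (X.map (sigmaC V)).map (f.baseChange ℂ) ≤ X'.map (sigmaC V') := by
  rintro - ⟨-, ⟨y, hy, rfl⟩, rfl⟩
  exact ⟨f.baseChange ℂ y, h ⟨y, hy, rfl⟩, (sigmaC_baseChange_comm f y).symm⟩

lemma map_Phi_le {W : ℤ → Submodule ℝ V} {F : ℤ → Submodule ℂ (ℂ ⊗[ℝ] V)}
    {W' : ℤ → Submodule ℝ V'} {F' : ℤ → Submodule ℂ (ℂ ⊗[ℝ] V')}
    (f : V →ₗ[ℝ] V')
    (hfW : ∀ n : ℤ, (W n).map f ≤ W' n)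
    (hfF : ∀ p : ℤ, (F p).map (f.baseChange ℂ) ≤ F' p) (p q : ℤ) :
    (Phi W F p q).map (f.baseChange ℂ) ≤ Phi W' F' p q := by
  unfold Phi PhiT
  refine le_trans (Submodule.map_inf_le (f.baseChange ℂ)) (inf_le_inf ?_ ?_)
  · exact le_trans (Submodule.map_inf_le (f.baseChange ℂ))
      (inf_le_inf (hfF p) (map_baseChange_le (hfW (p + q))))
  · rw [Submodule.map_sup]
    refine sup_le (le_trans ?_ le_sup_left) (le_trans ?_ le_sup_right)
    · exact le_trans (Submodule.map_inf_le (f.baseChange ℂ))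
        (inf_le_inf (map_sigma_map_le (hfF q)) (map_baseChange_le (hfW (p + q))))
    · rw [Submodule.map_iSup]
      refine iSup_le fun j => ?_
      rw [Submodule.map_iSup]
      refine iSup_le fun hj => ?_
      refine le_trans ?_ (le_biSup' _ hj)
      exact le_trans (Submodule.map_inf_le (f.baseChange ℂ))
        (inf_le_inf (map_sigma_map_le (hfF (q - j + 1)))
          (map_baseChange_le (hfW (p + q - j))))

end Funct


/-- functoriality of the Deligne splitting. If `f` is a morphism of mixed
Hodge structures `(V, W, F) → (V', W', F')` and `I`, `I'` are the Deligne splittings of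
`V_ℂ` and `V'_ℂ`, then `f_ℂ(I^{p,q}) ⊆ I'^{p,q}` for all `(p, q)`. -/
theorem deligne_splitting_functorial (V V' : Type*)
    [AddCommGroup V] [Module ℝ V] [FiniteDimensional ℝ V]
    [AddCommGroup V'] [Module ℝ V'] [FiniteDimensional ℝ V']
    (W : ℤ → Submodule ℝ V) (F : ℤ → Submodule ℂ (ℂ ⊗[ℝ] V))
    (W' : ℤ → Submodule ℝ V') (F' : ℤ → Submodule ℂ (ℂ ⊗[ℝ] V'))
    (hWF : IsMixedHodgeStructure V W F) (hWF' : IsMixedHodgeStructure V' W' F')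
    (f : V →ₗ[ℝ] V')
    (hfW : ∀ n : ℤ, (W n).map f ≤ W' n)
    (hfF : ∀ p : ℤ, (F p).map (f.baseChange ℂ) ≤ F' p)
    (I : ℤ × ℤ → Submodule ℂ (ℂ ⊗[ℝ] V)) (I' : ℤ × ℤ → Submodule ℂ (ℂ ⊗[ℝ] V'))
    (hI : IsDeligneSplitting V W F I) (hI' : IsDeligneSplitting V' W' F' I') :
    ∀ p q : ℤ, (I (p, q)).map (f.baseChange ℂ) ≤ I' (p, q) := by
  intro p q
  exact le_trans (Submodule.map_mono (I_le_Phi hWF hI p q))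
    (le_trans (map_Phi_le f hfW hfF p q) (Phi_le_I hI' p q))
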